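/- Let φ be a Leibniz 2-cocycle on the twisted Schrödinger-Virasoro algebra with φ(L_{-1},L_1) = φ(L_{-1},Y_1) = φ(L_{-1},M_1) = 0. Then φ(L_1,L_{-1}) = φ(L_1,Y_{-1}) = φ(L_1,M_{-1}) = 0. -/

import Mathlib

abbrev B : Type := ℤ ⊕ ℤ ⊕ ℤ
abbrev V : Type := B →₀ ℂ

noncomputable def Lg (n : ℤ) : V := Finsupp.single (Sum.inl n) 1
noncomputable def Yg (n : ℤ) : V := Finsupp.single (Sum.inr (Sum.inl n)) 1
noncomputable def Mg (n : ℤ) : V := Finsupp.single (Sum.inr (Sum.inr n)) 1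

/-- Bracket on basis elements of the twisted Schrödinger–Virasoro algebra. -/
noncomputable def brB : B → B → V
  | Sum.inl n, Sum.inl m => ((m : ℂ) - n) • Lg (n + m)
  | Sum.inl n, Sum.inr (Sum.inl m) => ((m : ℂ) - n / 2) • Yg (n + m)
  | Sum.inl n, Sum.inr (Sum.inr p) => (p : ℂ) • Mg (n + p)
  | Sum.inr (Sum.inl m), Sum.inl n => -(((m : ℂ) - n / 2) • Yg (n + m))
  | Sum.inr (Sum.inr p), Sum.inl n => -((p : ℂ) • Mg (n + p))
  | Sum.inr (Sum.inl m), Sum.inr (Sum.inl m') => ((m' : ℂ) - m) • Mg (m + m')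
  | _, _ => 0

/-- The bilinear extension of the bracket to the whole space. -/
noncomputable def bk : V →ₗ[ℂ] V →ₗ[ℂ] V :=
  Finsupp.lsum ℂ fun a => LinearMap.toSpanSingleton ℂ (V →ₗ[ℂ] V)
    (Finsupp.lsum ℂ fun b => LinearMap.toSpanSingleton ℂ V (brB a b))

lemma bk_single (a b : B) : bk (Finsupp.single a 1) (Finsupp.single b 1) = brB a b := by
  simp [bk, Finsupp.lsum_single, LinearMap.toSpanSingleton_apply_one]

lemma bkLL (n m : ℤ) : bk (Lg n) (Lg m) = ((m : ℂ) - n) • Lg (n + m) := bk_single _ _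
lemma bkLY (n m : ℤ) : bk (Lg n) (Yg m) = ((m : ℂ) - n / 2) • Yg (n + m) := bk_single _ _
lemma bkLM (n p : ℤ) : bk (Lg n) (Mg p) = (p : ℂ) • Mg (n + p) := bk_single _ _
lemma bkYL (m n : ℤ) : bk (Yg m) (Lg n) = -(((m : ℂ) - n / 2) • Yg (n + m)) := bk_single _ _
lemma bkML (p n : ℤ) : bk (Mg p) (Lg n) = -((p : ℂ) • Mg (n + p)) := bk_single _ _
lemma bkYY (m m' : ℤ) : bk (Yg m) (Yg m') = ((m' : ℂ) - m) • Mg (m + m') := bk_single _ _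
lemma bkYM (m p : ℤ) : bk (Yg m) (Mg p) = 0 := bk_single _ _
lemma bkMY (p m : ℤ) : bk (Mg p) (Yg m) = 0 := bk_single _ _
lemma bkMM (p q : ℤ) : bk (Mg p) (Mg q) = 0 := bk_single _ _

/-- `φ` is a Leibniz 2-cocycle on the twisted Schrödinger–Virasoro algebra. -/
def IsLeibnizCocycle (φ : V →ₗ[ℂ] V →ₗ[ℂ] ℂ) : Prop :=
  ∀ x y z : V, φ x (bk y z) = φ (bk x y) z - φ (bk x z) y

theorem stmt5 (φ : V →ₗ[ℂ] V →ₗ[ℂ] ℂ) (hco : IsLeibnizCocycle φ)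
    (h1 : φ (Lg (-1)) (Lg 1) = 0) (h2 : φ (Lg (-1)) (Yg 1) = 0)
    (h3 : φ (Lg (-1)) (Mg 1) = 0) :
    φ (Lg 1) (Lg (-1)) = 0 ∧ φ (Lg 1) (Yg (-1)) = 0 ∧ φ (Lg 1) (Mg (-1)) = 0 := by
  have e1 := hco (Lg (-1)) (Lg 1) (Lg 0)
  norm_num [bkLL, bkLY, bkLM, bkYL, bkML, bkYY, bkYM, bkMY, bkMM,
    map_smul, LinearMap.smul_apply, map_neg, LinearMap.neg_apply, h1, h2, h3] at e1
  -- goal 1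
  have e2 := hco (Lg 0) (Lg 1) (Lg (-1))
  norm_num [bkLL, bkLY, bkLM, bkYL, bkML, bkYY, bkYM, bkMY, bkMM,
    map_smul, LinearMap.smul_apply, map_neg, LinearMap.neg_apply, h1, h2, h3, e1] at e2
  -- φ(Y0,L0)=0
  have e3 := hco (Lg (-1)) (Yg 1) (Lg 0)
  norm_num [bkLL, bkLY, bkLM, bkYL, bkML, bkYY, bkYM, bkMY, bkMM,
    map_smul, LinearMap.smul_apply, map_neg, LinearMap.neg_apply, h1, h2, h3] at e3
  have e4 := hco (Lg (-1)) (Yg 0) (Lg 1)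
  norm_num [bkLL, bkLY, bkLM, bkYL, bkML, bkYY, bkYM, bkMY, bkMM,
    map_smul, LinearMap.smul_apply, map_neg, LinearMap.neg_apply, h1, h2, h3] at e4
  have e5 := hco (Lg 0) (Yg 1) (Lg (-1))
  norm_num [bkLL, bkLY, bkLM, bkYL, bkML, bkYY, bkYM, bkMY, bkMM,
    map_smul, LinearMap.smul_apply, map_neg, LinearMap.neg_apply, h1, h2, h3] at e5
  have e6 := hco (Yg 0) (Lg 1) (Lg (-1))
  norm_num [bkLL, bkLY, bkLM, bkYL, bkML, bkYY, bkYM, bkMY, bkMM,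
    map_smul, LinearMap.smul_apply, map_neg, LinearMap.neg_apply, h1, h2, h3, e3] at e6
  have hc : (φ (Lg 0)) (Yg 0) = 0 := by
    linear_combination (-4/5 : ℂ) * e6 + (2/5 : ℂ) * e5 + (4/5 : ℂ) * e4
  have hB : (φ (Yg (-1))) (Lg 1) = 0 := by linear_combination (-2 : ℂ) * e4 + 4 * hc
  -- goal 2
  have e7 := hco (Lg 0) (Lg 1) (Yg (-1))
  norm_num [bkLL, bkLY, bkLM, bkYL, bkML, bkYY, bkYM, bkMY, bkMM,
    map_smul, LinearMap.smul_apply, map_neg, LinearMap.neg_apply, h1, h2, h3, hc, hB] at e7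
  -- M sector
  have e8 := hco (Lg (-1)) (Lg 0) (Mg 1)
  norm_num [bkLL, bkLY, bkLM, bkYL, bkML, bkYY, bkYM, bkMY, bkMM,
    map_smul, LinearMap.smul_apply, map_neg, LinearMap.neg_apply, h1, h2, h3] at e8
  have e9 := hco (Lg (-1)) (Mg 0) (Lg 1)
  norm_num [bkLL, bkLY, bkLM, bkYL, bkML, bkYY, bkYM, bkMY, bkMM,
    map_smul, LinearMap.smul_apply, map_neg, LinearMap.neg_apply, h1, h2, h3] at e9
  have e10 := hco (Lg 0) (Mg 1) (Lg (-1))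
  norm_num [bkLL, bkLY, bkLM, bkYL, bkML, bkYY, bkYM, bkMY, bkMM,
    map_smul, LinearMap.smul_apply, map_neg, LinearMap.neg_apply, h1, h2, h3, e9] at e10
  have e11 := hco (Lg (-1)) (Yg 0) (Yg 1)
  norm_num [bkLL, bkLY, bkLM, bkYL, bkML, bkYY, bkYM, bkMY, bkMM,
    map_smul, LinearMap.smul_apply, map_neg, LinearMap.neg_apply, h1, h2, h3] at e11
  have e12 := hco (Yg 0) (Yg 1) (Lg (-1))
  norm_num [bkLL, bkLY, bkLM, bkYL, bkML, bkYY, bkYM, bkMY, bkMM,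
    map_smul, LinearMap.smul_apply, map_neg, LinearMap.neg_apply, h1, h2, h3, e10] at e12
  have hM : (φ (Mg 1)) (Lg (-1)) = 0 := e10.symm
  have ha : (φ (Yg 0)) (Yg 0) = 0 := by
    linear_combination (1/3 : ℂ) * e11 + (-1/3 : ℂ) * e12 + (1/3 : ℂ) * e10
  have e13 := hco (Yg 1) (Lg (-1)) (Yg 0)
  norm_num [bkLL, bkLY, bkLM, bkYL, bkML, bkYY, bkYM, bkMY, bkMM,
    map_smul, LinearMap.smul_apply, map_neg, LinearMap.neg_apply, h1, h2, h3, ha, hM] at e13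
  have e14 := hco (Yg 0) (Lg 1) (Yg (-1))
  norm_num [bkLL, bkLY, bkLM, bkYL, bkML, bkYY, bkYM, bkMY, bkMM,
    map_smul, LinearMap.smul_apply, map_neg, LinearMap.neg_apply, h1, h2, h3, ha, e13] at e14
  have e15 := hco (Lg 1) (Yg 0) (Yg (-1))
  norm_num [bkLL, bkLY, bkLM, bkYL, bkML, bkYY, bkYM, bkMY, bkMM,
    map_smul, LinearMap.smul_apply, map_neg, LinearMap.neg_apply, h1, h2, h3, ha, e13, e14] at e15
  exact ⟨e2.symm, e7.symm, e15⟩
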